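/- Let x ∈ ℝʳ have all coordinates nonzero and not alternating in sign, and let A be an r×r matrix that is totally non-negative of order r−1 (all minors of size ≤ r−1 are ≥ 0). Then there exists i ∈ [r] with xᵢ(Ax)ᵢ ≥ 0. -/

import Mathlib

open Matrix


private lemma det_updateCol_sum'' {p : ℕ} (M : Matrix (Fin p) (Fin p) ℝ) (j : Fin p)
    {ι : Type*} (t : Finset ι) (c : ι → ℝ) (v : ι → Fin p → ℝ) :
    (M.updateCol j (∑ k ∈ t, c k • v k)).det = ∑ k ∈ t, c k * (M.updateCol j (v k)).det := by
  classical
  induction t using Finset.induction_on with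
  | empty =>
      simp only [Finset.sum_empty]
      exact Matrix.det_eq_zero_of_column_eq_zero j (fun i => by simp [Matrix.updateCol_self])
  | insert _ _ hk ih =>
      rw [Finset.sum_insert hk, Finset.sum_insert hk, Matrix.det_updateCol_add,
        Matrix.det_updateCol_smul, ih]

private lemma det_sub_zero_of_strictMono {s N : ℕ} (M : Matrix (Fin N) (Fin N) ℝ)
    (e : Fin s → Fin N)
    (H : ∀ c : Fin s → Fin N, StrictMono c → (M.submatrix e c).det = 0)
    (c : Fin s → Fin N) : (M.submatrix e c).det = 0 := by
  by_cases hinj : Function.Injective c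
  · have hmono : Monotone (c ∘ Tuple.sort c) := Tuple.monotone_sort c
    have hsm : StrictMono (c ∘ Tuple.sort c) :=
      hmono.strictMono_of_injective (hinj.comp (Tuple.sort c).injective)
    have hM : M.submatrix e c
        = (M.submatrix e (c ∘ Tuple.sort c)).submatrix id ⇑(Tuple.sort c)⁻¹ := by
      ext i k
      simp [Matrix.submatrix_apply]
    rw [hM, Matrix.det_permute', H _ hsm, mul_zero]
  · obtain ⟨a, b, hab, hne⟩ := Function.not_injective_iff.mp hinj
    exact Matrix.det_zero_of_column_eq hne (fun k => by simp [Matrix.submatrix_apply, hab])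

private lemma det_block_sum {s R' : ℕ} (A : Matrix (Fin R') (Fin R') ℝ)
    (ρ : Fin s → Fin R') (S : Fin s → Finset (Fin R')) (c : Fin R' → ℝ) :
    (Matrix.of fun p q : Fin s => ∑ j ∈ S q, A (ρ p) j * c j).det
      = ∑ φ ∈ Fintype.piFinset S, (∏ q, c (φ q)) * (A.submatrix ρ φ).det := by
  rw [← Matrix.det_transpose]
  have h1 : (Matrix.of fun p q : Fin s => ∑ j ∈ S q, A (ρ p) j * c j)ᵀ
      = Matrix.of fun q : Fin s => ∑ j ∈ S q, c j • (fun p : Fin s => A (ρ p) j) := by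
    ext q p
    simp [Matrix.transpose_apply, Finset.sum_apply, mul_comm]
  rw [h1]
  have h2 := (Matrix.detRowAlternating (n := Fin s) (R := ℝ)).toMultilinearMap.map_sum_finset
    (fun q j => c j • (fun p : Fin s => A (ρ p) j)) S
  have h3 : (Matrix.of fun q : Fin s => ∑ j ∈ S q, c j • (fun p : Fin s => A (ρ p) j)).det
      = ∑ φ ∈ Fintype.piFinset S,
          (Matrix.detRowAlternating (n := Fin s) (R := ℝ)).toMultilinearMap
            (fun q => c (φ q) • (fun p : Fin s => A (ρ p) (φ q))) := h2
  rw [h3]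
  refine Finset.sum_congr rfl (fun φ _ => ?_)
  rw [MultilinearMap.map_smul_univ]
  have h4 : (Matrix.detRowAlternating (n := Fin s) (R := ℝ)).toMultilinearMap
      (fun q => (fun p : Fin s => A (ρ p) (φ q))) = (A.submatrix ρ φ).det := by
    have : (Matrix.of fun q p : Fin s => A (ρ p) (φ q)) = (A.submatrix ρ φ)ᵀ := by
      ext q p; simp [Matrix.transpose_apply, Matrix.submatrix_apply]
    calc (Matrix.detRowAlternating (n := Fin s) (R := ℝ)).toMultilinearMap
          (fun q => (fun p : Fin s => A (ρ p) (φ q)))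
        = (Matrix.of fun q p : Fin s => A (ρ p) (φ q)).det := rfl
      _ = (A.submatrix ρ φ)ᵀ.det := by rw [this]
      _ = (A.submatrix ρ φ).det := Matrix.det_transpose _
  rw [h4, smul_eq_mul]

private lemma neg_one_pow_two_mul_add (a b : ℕ) : ((-1 : ℝ)) ^ (2 * a + b) = (-1) ^ b := by
  rw [pow_add, pow_mul, neg_one_sq, one_pow, one_mul]

private lemma lemL {n : ℕ} (hn : 0 < n) (V : Matrix (Fin n) (Fin n) ℝ) (z : Fin n → ℝ)
    (hTN : ∀ (s : ℕ) (f g : Fin s → Fin n), StrictMono f → StrictMono g →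
      0 ≤ (V.submatrix f g).det)
    (hz : ∀ l : Fin n, z l = ∑ m : Fin n, (-1 : ℝ) ^ (m : ℕ) * V l m)
    (hsign : ∀ l : Fin n, (-1 : ℝ) ^ (l : ℕ) * z l < 0) : False := by
  classical
  obtain ⟨N, rfl⟩ : ∃ m, n = m + 1 := ⟨n - 1, by omega⟩
  -- Step 1 : det V = 0
  have hdetV : 0 ≤ V.det := by
    have := hTN (N + 1) id id strictMono_id strictMono_id
    simpa using this
  have hdet0 : V.det = 0 := by
    have h1 : (V.updateCol 0 z).det = V.det := by
      have hz' : z = ∑ m : Fin (N + 1), ((-1 : ℝ) ^ (m : ℕ)) • (fun i => V i m) := by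
        funext l
        rw [hz l]
        simp [Finset.sum_apply]
      rw [hz', det_updateCol_sum'']
      rw [Finset.sum_eq_single (0 : Fin (N + 1))]
      · simp [Matrix.updateCol_eq_self]
      · intro m _ hm
        have : (V.updateCol 0 (fun i => V i m)).det = 0 := by
          refine Matrix.det_zero_of_column_eq (Ne.symm hm) (fun k => ?_)
          rw [Matrix.updateCol_self, Matrix.updateCol_ne hm]
        rw [this, mul_zero]
      · intro h; exact absurd (Finset.mem_univ _) h
    have h2 : (V.updateCol 0 z).det ≤ 0 := by
      rw [Matrix.det_succ_column_zero]
      refine Finset.sum_nonpos (fun i _ => ?_)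
      have hsub : ((V.updateCol 0 z).submatrix i.succAbove Fin.succ)
          = V.submatrix i.succAbove Fin.succ := by
        ext a b
        simp [Matrix.submatrix_apply, Matrix.updateCol_ne (Fin.succ_ne_zero b)]
      rw [hsub, Matrix.updateCol_self]
      exact mul_nonpos_of_nonpos_of_nonneg (le_of_lt (hsign i))
        (hTN _ i.succAbove Fin.succ (Fin.strictMono_succAbove i) Fin.strictMono_succ)
    linarith
  -- Step 2 : downward induction on minor size
  have Q : ∀ d s : ℕ, s + d = N + 1 → 1 ≤ s →
      ∀ (t : ℕ) (ht : t + s ≤ N + 1) (c : Fin s → Fin (N + 1)),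
        (V.submatrix (fun a : Fin s => (⟨t + a.1, by have := a.2; omega⟩ : Fin (N + 1))) c).det
          = 0 := by
    intro d
    induction d with
    | zero =>
      intro s hs hs1 t ht c
      have hsN : s = N + 1 := by omega
      subst hsN
      have ht0 : t = 0 := by omega
      subst ht0
      have hM : V.submatrix (fun a : Fin (N + 1) =>
            (⟨0 + a.1, by have := a.2; omega⟩ : Fin (N + 1))) c = V.submatrix id c := by
        ext i k
        simp [Matrix.submatrix_apply]
      rw [hM]
      by_cases hinj : Function.Injective c
      · have hbij : Function.Bijective c := Finite.injective_iff_bijective.mp hinj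
        have hc : c = ⇑(Equiv.ofBijective c hbij) := rfl
        rw [hc, Matrix.det_permute', hdet0, mul_zero]
      · obtain ⟨a, b, hab, hne⟩ := Function.not_injective_iff.mp hinj
        exact Matrix.det_zero_of_column_eq hne (fun k => by simp [Matrix.submatrix_apply, hab])
    | succ d IH =>
      intro s hs hs1 t ht c
      refine det_sub_zero_of_strictMono V _ (fun g hg => ?_) c
      -- the key claim
      have key : ∀ (t' : ℕ) (ht' : t' + (s + 1) ≤ N + 1) (m : Fin (s + 1)),
          (V.submatrix (fun a : Fin s =>
            (⟨t' + (m.succAbove a).1, by have := (m.succAbove a).2; omega⟩ : Fin (N + 1))) g).det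
              = 0 := by
        intro t' ht' m
        set B0 : Matrix (Fin (s + 1)) (Fin (s + 1)) ℝ := Matrix.of (fun p q =>
          if h : (q : ℕ) < s then V ⟨t' + p.1, by have := p.2; omega⟩ (g ⟨q.1, h⟩) else 0)
          with hB0
        set zc : Fin (s + 1) → ℝ := fun p => z ⟨t' + p.1, by have := p.2; omega⟩ with hzc
        -- the determinant of the bordered matrix vanishes
        have hNdet : (B0.updateCol (Fin.last s) zc).det = 0 := by
          have hzc' : zc = ∑ m' : Fin (N + 1), ((-1 : ℝ) ^ (m' : ℕ)) •
              (fun p : Fin (s + 1) => V ⟨t' + p.1, by have := p.2; omega⟩ m') := by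
            funext p
            rw [hzc]
            simp [hz, Finset.sum_apply]
          rw [hzc', det_updateCol_sum'']
          refine Finset.sum_eq_zero (fun m' _ => ?_)
          have hupd : B0.updateCol (Fin.last s)
                (fun p : Fin (s + 1) => V ⟨t' + p.1, by have := p.2; omega⟩ m')
              = V.submatrix (fun p : Fin (s + 1) =>
                  (⟨t' + p.1, by have := p.2; omega⟩ : Fin (N + 1)))
                (fun q : Fin (s + 1) => if h : (q : ℕ) < s then g ⟨q.1, h⟩ else m') := by
            ext p q
            by_cases hq : (q : ℕ) < s
            · have hqlast : q ≠ Fin.last s := by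
                intro hcon; rw [hcon] at hq; simp at hq
              rw [Matrix.updateCol_ne hqlast]
              simp [hB0, Matrix.submatrix_apply, hq]
            · have hqlast : q = Fin.last s := by
                ext; have := q.2; simp only [Fin.val_last]; omega
              subst hqlast
              rw [Matrix.updateCol_self]
              simp [Matrix.submatrix_apply, hq]
          rw [hupd, IH (s + 1) (by omega) (by omega) t' ht' _, mul_zero]
        -- Laplace expansion along the last column
        have hexp := Matrix.det_succ_column (B0.updateCol (Fin.last s) zc) (Fin.last s)
        rw [hNdet] at hexp
        have hsub : ∀ m' : Fin (s + 1),
            (B0.updateCol (Fin.last s) zc).submatrix m'.succAbove (Fin.last s).succAbove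
              = V.submatrix (fun a : Fin s =>
                  (⟨t' + (m'.succAbove a).1,
                    by have := (m'.succAbove a).2; omega⟩ : Fin (N + 1))) g := by
          intro m'
          ext a b
          have hbl : (Fin.last s).succAbove b = Fin.castSucc b := by
            rw [Fin.succAbove_last]
          rw [Matrix.submatrix_apply, hbl, Matrix.updateCol_ne (Fin.castSucc_lt_last b).ne]
          have hbs : ((Fin.castSucc b : Fin (s + 1)) : ℕ) < s := by simp [b.2]
          simp [hB0, Matrix.submatrix_apply, hbs]
        set D : Fin (s + 1) → ℝ := fun m' =>
          (V.submatrix (fun a : Fin s =>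
            (⟨t' + (m'.succAbove a).1,
              by have := (m'.succAbove a).2; omega⟩ : Fin (N + 1))) g).det with hD
        have hDnn : ∀ m' : Fin (s + 1), 0 ≤ D m' := by
          intro m'
          refine hTN s _ g ?_ hg
          intro a b hab
          have := (Fin.strictMono_succAbove m') hab
          simp only [Fin.mk_lt_mk]
          omega
        have hsig2 : ∀ m' : Fin (s + 1),
            (-1 : ℝ) ^ (t' + (m' : ℕ)) * zc m' < 0 := by
          intro m'
          have := hsign ⟨t' + m'.1, by have := m'.2; omega⟩
          simpa [hzc] using this
        -- turn hexp into a sum of nonpositive terms equal to zero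
        have hexp2 : ∑ m' : Fin (s + 1),
            ((-1 : ℝ) ^ (t' + (m' : ℕ)) * zc m') * D m' = 0 := by
          have h5 : ∑ m' : Fin (s + 1),
              ((-1 : ℝ) ^ (s + t')) * ((-1 : ℝ) ^ ((m' : ℕ) + (Fin.last s : ℕ))
                * (B0.updateCol (Fin.last s) zc) m' (Fin.last s)
                * ((B0.updateCol (Fin.last s) zc).submatrix m'.succAbove
                    (Fin.last s).succAbove).det) = 0 := by
            rw [← Finset.mul_sum, ← hexp, mul_zero]
          rw [← h5]
          refine Finset.sum_congr rfl (fun m' _ => ?_)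
          rw [Matrix.updateCol_self, hsub m']
          have hv : ((Fin.last s : Fin (s + 1)) : ℕ) = s := rfl
          rw [hv]
          rw [show (-1 : ℝ) ^ (s + t') * ((-1 : ℝ) ^ ((m' : ℕ) + s) * zc m' * D m')
              = ((-1 : ℝ) ^ ((s + t') + ((m' : ℕ) + s)) * zc m') * D m' by ring]
          rw [show (s + t') + ((m' : ℕ) + s) = 2 * s + (t' + (m' : ℕ)) by ring]
          rw [neg_one_pow_two_mul_add]
        have hterm : ∀ m' ∈ (Finset.univ : Finset (Fin (s + 1))), ((-1 : ℝ) ^ (t' + (m' : ℕ)) * zc m') * D m' ≤ 0 :=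
          fun m' _ => mul_nonpos_of_nonpos_of_nonneg (le_of_lt (hsig2 m')) (hDnn m')
        have hzero := (Finset.sum_eq_zero_iff_of_nonpos hterm).mp hexp2 m (Finset.mem_univ m)
        rcases mul_eq_zero.mp hzero with h | h
        · exact absurd h (ne_of_lt (hsig2 m))
        · exact h
      by_cases hc : t + s + 1 ≤ N + 1
      · have h0 := key t (by omega) (Fin.last s)
        have hM : V.submatrix (fun a : Fin s =>
              (⟨t + a.1, by have := a.2; omega⟩ : Fin (N + 1))) g
            = V.submatrix (fun a : Fin s =>
              (⟨t + ((Fin.last s).succAbove a).1,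
                by have := ((Fin.last s).succAbove a).2; omega⟩ : Fin (N + 1))) g := by
          ext i k
          simp [Matrix.submatrix_apply, Fin.succAbove_last]
        rw [hM]
        exact h0
      · have ht1 : 1 ≤ t := by omega
        have h0 := key (t - 1) (by omega) 0
        have hM : V.submatrix (fun a : Fin s =>
              (⟨t + a.1, by have := a.2; omega⟩ : Fin (N + 1))) g
            = V.submatrix (fun a : Fin s =>
              (⟨(t - 1) + ((0 : Fin (s + 1)).succAbove a).1,
                by have := ((0 : Fin (s + 1)).succAbove a).2; omega⟩ : Fin (N + 1))) g := by
          ext i k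
          have : ((0 : Fin (s + 1)).succAbove i).1 = i.1 + 1 := by
            rw [Fin.succAbove_zero]; rfl
          simp only [Matrix.submatrix_apply, this]
          exact congrArg (fun w : Fin (N + 1) => V w (g k))
            (Fin.mk_eq_mk.mpr (by omega))
        rw [hM]
        exact h0
  -- Step 3 : conclude
  have hV0 : ∀ m : Fin (N + 1), V 0 m = 0 := by
    intro m
    have h := Q N 1 (by omega) le_rfl 0 (by omega) (fun _ => m)
    rw [Matrix.det_fin_one] at h
    have he : (⟨0 + ((0 : Fin 1) : ℕ), by omega⟩ : Fin (N + 1)) = 0 := by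
      ext; simp
    simpa [Matrix.submatrix_apply, he] using h
  have h0 := hsign 0
  rw [hz 0] at h0
  simp [hV0] at h0

private noncomputable def chg (f : ℕ → ℝ) : ℕ → ℕ
  | 0 => 0
  | n + 1 => chg f n + (if f n * f (n + 1) < 0 then 1 else 0)

private lemma chg_zero (f : ℕ → ℝ) : chg f 0 = 0 := rfl

private lemma chg_succ (f : ℕ → ℝ) (n : ℕ) :
    chg f (n + 1) = chg f n + (if f n * f (n + 1) < 0 then 1 else 0) := rfl

private lemma chg_succ_of_neg (f : ℕ → ℝ) {n : ℕ} (h : f n * f (n + 1) < 0) :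
    chg f (n + 1) = chg f n + 1 := by rw [chg_succ, if_pos h]

private lemma chg_succ_of_nonneg (f : ℕ → ℝ) {n : ℕ} (h : ¬ f n * f (n + 1) < 0) :
    chg f (n + 1) = chg f n := by rw [chg_succ, if_neg h]; omega

private lemma chg_mono (f : ℕ → ℝ) : Monotone (chg f) := by
  refine monotone_nat_of_le_succ (fun n => ?_)
  rw [chg_succ]
  omega

private lemma chg_succ_le (f : ℕ → ℝ) (n : ℕ) : chg f (n + 1) ≤ chg f n + 1 := by
  rw [chg_succ]; split <;> omega

private lemma chg_surj (f : ℕ → ℝ) : ∀ N l, l ≤ chg f N → ∃ m, m ≤ N ∧ chg f m = l := by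
  intro N
  induction N with
  | zero => intro l hl; exact ⟨0, le_rfl, by rw [chg_zero] at hl ⊢; omega⟩
  | succ N IH =>
    intro l hl
    by_cases h : l ≤ chg f N
    · obtain ⟨m, hm, hm2⟩ := IH l h
      exact ⟨m, by omega, hm2⟩
    · have := chg_succ_le f N
      exact ⟨N + 1, le_rfl, by omega⟩

/-- If `x ∈ ℝʳ` has all coordinates nonzero and is not alternating in sign (some two
consecutive coordinates share a sign), and `A` is `TN_{r-1}` (all minors of size at most
`r-1` nonnegative), then there is `i` with `xᵢ (Ax)ᵢ ≥ 0`. -/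
theorem stmt19 {r : ℕ} (x : Fin r → ℝ) (hx0 : ∀ i, x i ≠ 0)
    (hsame : ∃ i : ℕ, ∃ h : i + 1 < r, 0 < x ⟨i, by omega⟩ * x ⟨i + 1, h⟩)
    (A : Matrix (Fin r) (Fin r) ℝ)
    (hTN : ∀ p : ℕ, p < r → ∀ (f g : Fin p → Fin r), StrictMono f → StrictMono g →
      0 ≤ (A.submatrix f g).det) :
    ∃ i : Fin r, 0 ≤ x i * (A.mulVec x) i := by
  classical
  by_contra hcon
  push_neg at hcon
  obtain ⟨j, hjr, hjsame⟩ := hsame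
  have hr2 : 2 ≤ r := by omega
  set X : ℕ → ℝ := fun n => if h : n < r then x ⟨n, h⟩ else 1 with hXdef
  have hXeq : ∀ (n : ℕ) (h : n < r), X n = x ⟨n, h⟩ := fun n h => by simp [hXdef, h]
  set b : ℕ → ℕ := chg X with hbdef
  set σ : ℝ := if 0 < X 0 then 1 else -1 with hσdef
  have hσσ : σ * σ = 1 := by rw [hσdef]; split <;> norm_num
  -- the sign of `x n` is `σ * (-1) ^ (b n)`
  have hsig : ∀ n, n < r → 0 < (σ * (-1) ^ (b n)) * X n := by
    intro n
    induction n with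
    | zero =>
      intro h0
      have hb0 : b 0 = 0 := chg_zero X
      rw [hb0, pow_zero, mul_one]
      have hx00 : X 0 ≠ 0 := by rw [hXeq 0 h0]; exact hx0 _
      rw [hσdef]
      split
      · next h => simpa using h
      · next h =>
          have hlt : X 0 < 0 := lt_of_le_of_ne (not_lt.mp h) hx00
          nlinarith
    | succ n IH =>
      intro h1
      have hn : n < r := by omega
      have IH2 := IH hn
      have hXn : X n ≠ 0 := by rw [hXeq n hn]; exact hx0 _
      have hXn1 : X (n + 1) ≠ 0 := by rw [hXeq _ h1]; exact hx0 _
      by_cases hpr : X n * X (n + 1) < 0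
      · have hb1 : b (n + 1) = b n + 1 := chg_succ_of_neg X hpr
        have h3 : (σ * (-1) ^ (b n)) * X (n + 1) < 0 := by
          by_contra hge
          push_neg at hge
          have h4 : ((σ * (-1) ^ (b n)) * X n) * (X n * X (n + 1)) < 0 :=
            mul_neg_of_pos_of_neg IH2 hpr
          have h5 : ((σ * (-1) ^ (b n)) * X n) * (X n * X (n + 1))
              = (X n * X n) * ((σ * (-1) ^ (b n)) * X (n + 1)) := by ring
          rw [h5] at h4
          exact absurd h4 (not_lt.mpr (mul_nonneg (mul_self_nonneg _) hge))
        rw [hb1, pow_succ]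
        have heq : σ * ((-1 : ℝ) ^ (b n) * -1) * X (n + 1)
            = -((σ * (-1) ^ (b n)) * X (n + 1)) := by ring
        rw [heq]
        linarith
      · have hb1 : b (n + 1) = b n := chg_succ_of_nonneg X hpr
        have hpr' : 0 < X n * X (n + 1) :=
          lt_of_le_of_ne (not_lt.mp hpr) (Ne.symm (mul_ne_zero hXn hXn1))
        rw [hb1]
        by_contra hge
        push_neg at hge
        have h4 : 0 < ((σ * (-1) ^ (b n)) * X n) * (X n * X (n + 1)) := mul_pos IH2 hpr'
        have h5 : ((σ * (-1) ^ (b n)) * X n) * (X n * X (n + 1))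
            = (X n * X n) * ((σ * (-1) ^ (b n)) * X (n + 1)) := by ring
        rw [h5] at h4
        nlinarith [mul_self_nonneg (X n)]
  -- `b` jumps by at most one, and stalls at `j`
  have hbj : b (j + 1) = b j := by
    refine chg_succ_of_nonneg X ?_
    rw [hXeq j (by omega), hXeq (j + 1) hjr]
    push_neg
    exact le_of_lt hjsame
  have hble : ∀ n, b n ≤ n := by
    intro n
    induction n with
    | zero => exact (chg_zero X).le
    | succ n IH =>
      have h := chg_succ_le X n
      rw [← hbdef] at h
      omega
  have hk2 : ∀ n, j + 1 ≤ n → b n ≤ n - 1 := by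
    intro n
    induction n with
    | zero => omega
    | succ n IH =>
      intro hjn
      by_cases h : j + 1 ≤ n
      · have h1 := IH h
        have h2 := chg_succ_le X n
        rw [← hbdef] at h2
        omega
      · have hnj : n = j := by omega
        subst hnj
        rw [hbj]
        have := hble n
        omega
  set k : ℕ := b (r - 1) with hkdef
  have hkr : k + 1 ≤ r - 1 := by
    have := hk2 (r - 1) (by omega)
    omega
  have hsur : ∀ l : ℕ, l ≤ k → ∃ m, m ≤ r - 1 ∧ b m = l := fun l hl => chg_surj X (r - 1) l hl
  set idx : Fin (k + 1) → ℕ := fun l => Nat.find (hsur l.1 (by have := l.2; omega)) with hidxdef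
  have hidx : ∀ l : Fin (k + 1), idx l ≤ r - 1 ∧ b (idx l) = l.1 :=
    fun l => Nat.find_spec (hsur l.1 (by have := l.2; omega))
  set I : Fin (k + 1) → Fin r := fun l => ⟨idx l, by have := (hidx l).1; omega⟩ with hIdef
  have hIsm : StrictMono I := by
    intro l l' hlt
    have h1 : b (idx l) = l.1 := (hidx l).2
    have h2 : b (idx l') = l'.1 := (hidx l').2
    rw [hIdef]
    simp only [Fin.mk_lt_mk]
    by_contra hle
    push_neg at hle
    have h3 := chg_mono X hle
    rw [← hbdef] at h3
    have hlt' : l.1 < l'.1 := hlt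
    omega
  set fib : Fin r → Fin (k + 1) := fun jj =>
    ⟨b jj.1, by
      have h := chg_mono X (show jj.1 ≤ r - 1 by have := jj.2; omega)
      rw [← hbdef] at h
      omega⟩
    with hfibdef
  set V : Matrix (Fin (k + 1)) (Fin (k + 1)) ℝ := Matrix.of fun l m =>
    ∑ jj ∈ Finset.univ.filter (fun jj : Fin r => fib jj = m), A (I l) jj * |x jj| with hVdef
  -- decomposition of x into sign and modulus
  have hxE : ∀ jj : Fin r, x jj = (σ * (-1) ^ (b jj.1)) * |x jj| := by
    intro jj
    have h1 := hsig jj.1 jj.2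
    rw [hXeq jj.1 jj.2, Fin.eta] at h1
    have hE : σ * (-1 : ℝ) ^ (b jj.1) = 1 ∨ σ * (-1 : ℝ) ^ (b jj.1) = -1 := by
      have hs : σ = 1 ∨ σ = -1 := by rw [hσdef]; split <;> simp
      rcases hs with h | h <;> rcases Nat.even_or_odd (b jj.1) with he | he <;>
        rw [h] <;> first
          | (rw [he.neg_one_pow]; norm_num)
          | (rw [Odd.neg_one_pow he]; norm_num)
    rcases hE with h | h <;> rw [h] at h1 ⊢
    · rw [one_mul] at h1 ⊢
      rw [abs_of_pos h1]
    · have : x jj < 0 := by linarith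
      rw [abs_of_neg this]; ring
  set z : Fin (k + 1) → ℝ := fun l => A.mulVec x (I l) with hzdef
  -- the compressed linear relation
  have hzf : ∀ l : Fin (k + 1), σ * z l = ∑ m : Fin (k + 1), (-1 : ℝ) ^ (m : ℕ) * V l m := by
    intro l
    have h1 : z l = ∑ jj : Fin r, A (I l) jj * x jj := by
      rw [hzdef]
      simp [Matrix.mulVec, dotProduct]
    have h2 : ∑ jj : Fin r, A (I l) jj * x jj
        = ∑ m : Fin (k + 1), ∑ jj ∈ Finset.univ.filter (fun jj : Fin r => fib jj = m),
            A (I l) jj * x jj :=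
      (Finset.sum_fiberwise_of_maps_to (fun jj _ => Finset.mem_univ (fib jj)) _).symm
    have h3 : ∀ m : Fin (k + 1),
        ∑ jj ∈ Finset.univ.filter (fun jj : Fin r => fib jj = m), A (I l) jj * x jj
          = (σ * (-1 : ℝ) ^ (m : ℕ)) * V l m := by
      intro m
      rw [hVdef]
      simp only [Matrix.of_apply]
      rw [Finset.mul_sum]
      refine Finset.sum_congr rfl (fun jj hjj => ?_)
      have hb : b jj.1 = m.1 := by
        have := (Finset.mem_filter.mp hjj).2
        rw [hfibdef] at this
        exact congrArg Fin.val this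
      conv_lhs => rw [hxE jj]
      rw [hb]
      ring
    calc σ * z l = σ * ∑ m : Fin (k + 1), (σ * (-1 : ℝ) ^ (m : ℕ)) * V l m := by
          rw [h1, h2]
          congr 1
          exact Finset.sum_congr rfl (fun m _ => h3 m)
      _ = ∑ m : Fin (k + 1), (-1 : ℝ) ^ (m : ℕ) * V l m := by
          rw [Finset.mul_sum]
          refine Finset.sum_congr rfl (fun m _ => ?_)
          rw [show σ * ((σ * (-1 : ℝ) ^ (m : ℕ)) * V l m)
              = (σ * σ) * ((-1 : ℝ) ^ (m : ℕ) * V l m) by ring, hσσ, one_mul]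
  -- total nonnegativity of the compressed matrix
  have hTNV : ∀ (s : ℕ) (f g : Fin s → Fin (k + 1)), StrictMono f → StrictMono g →
      0 ≤ (V.submatrix f g).det := by
    intro s f g hf hg
    have hsle : s ≤ k + 1 := by
      have := Fintype.card_le_of_injective f hf.injective
      simpa using this
    have hVsub : V.submatrix f g = Matrix.of fun p q : Fin s =>
        ∑ jj ∈ Finset.univ.filter (fun jj : Fin r => fib jj = g q),
          A ((fun p => I (f p)) p) jj * |x jj| := rfl
    rw [hVsub, det_block_sum A (fun p => I (f p))
      (fun q => Finset.univ.filter (fun jj : Fin r => fib jj = g q)) (fun jj => |x jj|)]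
    refine Finset.sum_nonneg (fun φ hφ => ?_)
    have hφ2 : ∀ q, fib (φ q) = g q :=
      fun q => (Finset.mem_filter.mp (Fintype.mem_piFinset.mp hφ q)).2
    have hφsm : StrictMono φ := by
      intro q q' hlt
      have h4 : (fib (φ q)).1 < (fib (φ q')).1 := by
        rw [hφ2 q, hφ2 q']
        exact hg hlt
      rw [hfibdef] at h4
      simp only at h4
      by_contra hle
      push_neg at hle
      have h5 := chg_mono X (show (φ q').1 ≤ (φ q).1 from hle)
      rw [← hbdef] at h5
      omega
    refine mul_nonneg (Finset.prod_nonneg (fun q _ => abs_nonneg _))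
      (hTN s (by omega) _ φ (fun p p' h => hIsm (hf h)) hφsm)
  -- the sign condition for the compressed system
  have hsignV : ∀ l : Fin (k + 1), (-1 : ℝ) ^ (l : ℕ) * (σ * z l) < 0 := by
    intro l
    have h1 := hcon (I l)
    have h2 : x (I l) = (σ * (-1 : ℝ) ^ (l : ℕ)) * |x (I l)| := by
      have h3 := hxE (I l)
      have h4 : b (I l).1 = l.1 := (hidx l).2
      rw [h4] at h3
      exact h3
    have habs : 0 < |x (I l)| := abs_pos.mpr (hx0 _)
    rw [h2] at h1
    by_contra hge
    push_neg at hge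
    have h5 : ((σ * (-1 : ℝ) ^ (l : ℕ)) * |x (I l)|) * (A.mulVec x) (I l)
        = |x (I l)| * ((-1 : ℝ) ^ (l : ℕ) * (σ * z l)) := by
      rw [hzdef]
      ring
    rw [h5] at h1
    exact absurd h1 (not_lt.mpr (mul_nonneg habs.le hge))
  exact lemL (Nat.succ_pos k) V (fun l => σ * z l) hTNV hzf hsignV
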